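/- Let S = {s_1 < s_2 < ⋯ < s_n} be a set of positive integers, and let ℬ_S be the collection of all n-element sets {a_1 < a_2 < ⋯ < a_n} of positive integers with a_i ≤ s_i for each 1 ≤ i ≤ n. Then ℬ_S is the collection of bases of a matroid on {1,…,s_n}; concretely, ℬ_S is nonempty, and for any A, B ∈ ℬ_S and any a ∈ A \ B there exists b ∈ B \ A such that (A \ {a}) ∪ {b} ∈ ℬ_S. -/
import Mathlib

/-- `A` is a basis of the shifted matroid `SM(s_0, …, s_{n-1})`: an `n`-element set of
positive integers whose `i`-th smallest element is at most `s i`. -/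
def IsShiftedBasis (n : ℕ) (s : Fin n → ℕ) (A : Finset ℕ) : Prop :=
  (∀ a ∈ A, 0 < a) ∧ ∃ h : A.card = n, ∀ i : Fin n, (A.orderIsoOfFin h i : ℕ) ≤ s i

lemma orderIsoOfFin_le_iff {A : Finset ℕ} {n : ℕ} (h : A.card = n) (i : Fin n) (t : ℕ) :
    (A.orderIsoOfFin h i : ℕ) ≤ t ↔ (i : ℕ) < (A.filter (· ≤ t)).card := by
  constructor
  · intro ht
    have hsub : (Finset.Iic i).image (fun j => (A.orderIsoOfFin h j : ℕ)) ⊆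
        A.filter (· ≤ t) := by
      intro x hx
      simp only [Finset.mem_image, Finset.mem_Iic] at hx
      obtain ⟨j, hj, rfl⟩ := hx
      refine Finset.mem_filter.2 ⟨(A.orderIsoOfFin h j).2, ?_⟩
      have : (A.orderIsoOfFin h j : ℕ) ≤ (A.orderIsoOfFin h i : ℕ) := by
        exact_mod_cast (A.orderIsoOfFin h).monotone hj
      exact le_trans this ht
    have hinj : Function.Injective (fun j : Fin n => (A.orderIsoOfFin h j : ℕ)) :=
      fun x y hxy => (A.orderIsoOfFin h).injective (Subtype.ext hxy)
    have hcard := Finset.card_le_card hsub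
    rwa [Finset.card_image_of_injective _ hinj, Fin.card_Iic] at hcard
  · intro hc
    by_contra hlt
    push_neg at hlt
    have hsub : A.filter (· ≤ t) ⊆
        (Finset.Iio i).image (fun j => (A.orderIsoOfFin h j : ℕ)) := by
      intro x hx
      obtain ⟨hxA, hxt⟩ := Finset.mem_filter.1 hx
      obtain ⟨j, hj⟩ := (A.orderIsoOfFin h).surjective ⟨x, hxA⟩
      have hjx : (A.orderIsoOfFin h j : ℕ) = x := by rw [hj]
      have hji : j < i := by
        by_contra hji
        push_neg at hji
        have : (A.orderIsoOfFin h i : ℕ) ≤ (A.orderIsoOfFin h j : ℕ) := by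
          exact_mod_cast (A.orderIsoOfFin h).monotone hji
        omega
      exact Finset.mem_image.2 ⟨j, Finset.mem_Iio.2 hji, hjx⟩
    have hcard := Finset.card_le_card hsub
    have hinj : Function.Injective (fun j : Fin n => (A.orderIsoOfFin h j : ℕ)) :=
      fun x y hxy => (A.orderIsoOfFin h).injective (Subtype.ext hxy)
    rw [Finset.card_image_of_injective _ hinj, Fin.card_Iio] at hcard
    omega

lemma isShiftedBasis_iff_count (n : ℕ) (s : Fin n → ℕ) (A : Finset ℕ) :
    IsShiftedBasis n s A ↔ (∀ a ∈ A, 0 < a) ∧ A.card = n ∧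
      ∀ i : Fin n, (i : ℕ) < (A.filter (· ≤ s i)).card := by
  constructor
  · rintro ⟨hpos, h, hle⟩
    exact ⟨hpos, h, fun i => (orderIsoOfFin_le_iff h i (s i)).1 (hle i)⟩
  · rintro ⟨hpos, h, hlt⟩
    exact ⟨hpos, h, fun i => (orderIsoOfFin_le_iff h i (s i)).2 (hlt i)⟩

/-- For a set `s_0 < s_1 < ⋯ < s_{n-1}` of positive integers, the collection of
`n`-element sets `{a_1 < ⋯ < a_n}` of positive integers with `a_i ≤ s_i` for each `i`
is the collection of bases of a matroid: it is nonempty and satisfies the basis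
exchange axiom. -/
theorem shifted_is_matroid (n : ℕ) (hn : 0 < n) (s : Fin n → ℕ)
    (hs : StrictMono s) (hpos : ∀ i, 0 < s i) :
    (∃ A : Finset ℕ, IsShiftedBasis n s A) ∧
    ∀ A B : Finset ℕ, IsShiftedBasis n s A → IsShiftedBasis n s B → ∀ a ∈ A \ B,
      ∃ b ∈ B \ A, IsShiftedBasis n s (insert b (A.erase a)) := by
  have hsi : ∀ i : Fin n, (i : ℕ) < s i := by
    intro i
    obtain ⟨k, hk⟩ := i
    induction k with
    | zero => exact hpos _
    | succ m ih =>
      have hm : m < n := lt_trans (Nat.lt_succ_self m) hk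
      have h1 : s ⟨m, hm⟩ < s ⟨m + 1, hk⟩ := hs (by simp [Fin.lt_def])
      have h2 := ih hm
      simp only [Fin.val_mk] at h1 h2 ⊢
      omega
  constructor
  · refine ⟨Finset.Icc 1 n, (isShiftedBasis_iff_count n s _).2 ⟨?_, ?_, ?_⟩⟩
    · intro a ha; exact (Finset.mem_Icc.1 ha).1
    · simp
    · intro i
      have hsub : Finset.Icc 1 ((i : ℕ) + 1) ⊆ (Finset.Icc 1 n).filter (· ≤ s i) := by
        intro x hx
        rw [Finset.mem_Icc] at hx
        refine Finset.mem_filter.2 ⟨Finset.mem_Icc.2 ⟨hx.1, ?_⟩, ?_⟩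
        · have := i.2; omega
        · have := hsi i; omega
      have := Finset.card_le_card hsub
      rw [Nat.card_Icc] at this
      omega
  · intro A B hA hB a ha
    rw [Finset.mem_sdiff] at ha
    obtain ⟨hAB, hAcard, hAlt⟩ := (isShiftedBasis_iff_count n s A).1 hA
    obtain ⟨hBpos, hBcard, hBlt⟩ := (isShiftedBasis_iff_count n s B).1 hB
    have hne : (B \ A).Nonempty := by
      rw [Finset.sdiff_nonempty]
      intro hsub
      have : B = A := Finset.eq_of_subset_of_card_le hsub (by omega)
      exact ha.2 (this ▸ ha.1)
    set b := (B \ A).min' hne with hb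
    have hbmem := (B \ A).min'_mem hne
    rw [Finset.mem_sdiff] at hbmem
    refine ⟨b, Finset.mem_sdiff.2 hbmem, (isShiftedBasis_iff_count n s _).2 ⟨?_, ?_, ?_⟩⟩
    · intro x hx
      rcases Finset.mem_insert.1 hx with rfl | hx
      · exact hBpos _ hbmem.1
      · exact hAB _ (Finset.mem_of_mem_erase hx)
    · rw [Finset.card_insert_of_notMem (fun hx => hbmem.2 (Finset.mem_of_mem_erase hx)),
        Finset.card_erase_of_mem ha.1, hAcard]
      omega
    · intro i
      have t_def : s i = s i := rfl
      by_cases hbt : b ≤ s i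
      · -- count in insert: ≥ count in A
        have h1 : ((A.erase a).filter (· ≤ s i)).card ≥ (A.filter (· ≤ s i)).card - 1 := by
          have : (A.erase a).filter (· ≤ s i) = (A.filter (· ≤ s i)).erase a := by
            ext x; simp [Finset.mem_erase, Finset.mem_filter]; tauto
          rw [this]
          have := Finset.card_erase_of_mem (s := A.filter (· ≤ s i)) (a := a)
          by_cases hmem : a ∈ A.filter (· ≤ s i)
          · rw [Finset.card_erase_of_mem hmem]
          · rw [Finset.erase_eq_of_notMem hmem]; omega
        have h2 : (insert b (A.erase a)).filter (· ≤ s i)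
            = insert b ((A.erase a).filter (· ≤ s i)) := by
          rw [Finset.filter_insert]
          simp [hbt]
        rw [h2, Finset.card_insert_of_notMem]
        · have := hAlt i
          omega
        · intro hx
          exact hbmem.2 (Finset.mem_of_mem_erase (Finset.mem_filter.1 hx).1)
      · -- b > t : B's filter is contained in the new set's filter
        push_neg at hbt
        have hsub : B.filter (· ≤ s i) ⊆ (insert b (A.erase a)).filter (· ≤ s i) := by
          intro x hx
          obtain ⟨hxB, hxt⟩ := Finset.mem_filter.1 hx
          have hxA : x ∈ A := by
            by_contra hxA
            have : b ≤ x := Finset.min'_le _ _ (Finset.mem_sdiff.2 ⟨hxB, hxA⟩)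
            omega
          have hxa : x ≠ a := fun h => ha.2 (h ▸ hxB)
          refine Finset.mem_filter.2 ⟨Finset.mem_insert_of_mem
            (Finset.mem_erase.2 ⟨hxa, hxA⟩), hxt⟩
        have := Finset.card_le_card hsub
        have := hBlt i
        omega
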